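/- Let d ∈ ℕ, let F_d be the free group on d generators, let g ∈ ℂ[F_d] be hermitian, and let E ⊆ F_d be a finite grounded subset. If the matrix [g(s⁻¹t)]_{s,t∈E} ∈ M_E(ℂ) is positive semidefinite, then there exists a function g′ : F_d → ℂ of positive type such that g′(a) = g(a) for all a ∈ E⁻¹E := {s⁻¹t : s, t ∈ E}. -/

import Mathlib

open scoped ComplexOrder

/-- The canonical involution on the complex group algebra `ℂ[Γ]`:
`f*(s) = conj (f s⁻¹)`. -/
noncomputable def groupAlgebraStar {Γ : Type*} [Group Γ]
    (f : MonoidAlgebra ℂ Γ) : MonoidAlgebra ℂ Γ :=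
  MonoidAlgebra.ofCoeff (Finsupp.mapDomain (fun s : Γ => s⁻¹)
    (Finsupp.mapRange (starRingEnd ℂ) (map_zero _) f.coeff))

/-- A subset `E` of the free group `F_d` is grounded if it contains the identity and
is closed under taking right segments: whenever `t ∈ E` and `t = t′ * t″` without
cancellation (the reduced word lengths add up), the right factor `t″` lies in `E`. -/
def Grounded {d : ℕ} (E : Set (FreeGroup (Fin d))) : Prop :=
  (1 : FreeGroup (Fin d)) ∈ E ∧
    ∀ t ∈ E, ∀ t' t'' : FreeGroup (Fin d), t = t' * t'' →
      t.toWord.length = t'.toWord.length + t''.toWord.length → t'' ∈ E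

/-- A function `u : F_d → ℂ` is of positive type if
`Σ_{s,t} conj (h s) * h t * u (s⁻¹ t) ≥ 0` for every finitely supported `h`. -/
def IsPositiveType {d : ℕ} (u : FreeGroup (Fin d) → ℂ) : Prop :=
  ∀ h : FreeGroup (Fin d) →₀ ℂ,
    0 ≤ ∑ s ∈ h.support, ∑ t ∈ h.support,
      starRingEnd ℂ (h s) * h t * u (s⁻¹ * t)

/-- A family correspondence preserving all inner products extends to a global
linear isometry equivalence of a finite-dimensional complex inner product space. -/
lemma exists_isometryEquiv_of_inner_eq {H : Type*} [NormedAddCommGroup H]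
    [InnerProductSpace ℂ H] [FiniteDimensional ℂ H] {ι : Type*}
    (x y : ι → H) (hxy : ∀ i j, (inner ℂ (x i) (x j) : ℂ) = inner ℂ (y i) (y j)) :
    ∃ U : H ≃ₗᵢ[ℂ] H, ∀ i, U (x i) = y i := by
  classical
  set φ : (ι →₀ ℂ) →ₗ[ℂ] H := Finsupp.linearCombination ℂ x with hφ
  set ψ : (ι →₀ ℂ) →ₗ[ℂ] H := Finsupp.linearCombination ℂ y with hψ
  have happ : ∀ (z : ι → H) (c : ι →₀ ℂ),
      Finsupp.linearCombination ℂ z c = ∑ i ∈ c.support, c i • z i := by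
    intro z c; rw [Finsupp.linearCombination_apply, Finsupp.sum]
  have hinner : ∀ c c' : ι →₀ ℂ, (inner ℂ (φ c) (φ c') : ℂ) = inner ℂ (ψ c) (ψ c') := by
    intro c c'
    rw [hφ, hψ, happ, happ, happ, happ]
    simp only [sum_inner, inner_sum, inner_smul_left, inner_smul_right, hxy]
  have hker : LinearMap.ker φ ≤ LinearMap.ker ψ := by
    intro c hc
    rw [LinearMap.mem_ker] at hc ⊢
    have h0 : (inner ℂ (ψ c) (ψ c) : ℂ) = 0 := by rw [← hinner, hc, inner_zero_left]
    exact inner_self_eq_zero.mp h0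
  have hnorm : ∀ c : ι →₀ ℂ, ‖ψ c‖ = ‖φ c‖ := by
    intro c
    rw [@norm_eq_sqrt_re_inner ℂ, @norm_eq_sqrt_re_inner ℂ, hinner]
  let e := LinearMap.quotKerEquivRange φ
  let q : ((ι →₀ ℂ) ⧸ LinearMap.ker φ) →ₗ[ℂ] H := (LinearMap.ker φ).liftQ ψ hker
  let A : LinearMap.range φ →ₗ[ℂ] H := q ∘ₗ (e.symm : LinearMap.range φ →ₗ[ℂ] _)
  have hA : ∀ (c : ι →₀ ℂ) (hc : φ c ∈ LinearMap.range φ), A ⟨φ c, hc⟩ = ψ c := by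
    intro c hc
    have he : e (Submodule.Quotient.mk c) = ⟨φ c, hc⟩ := by
      apply Subtype.ext
      exact LinearMap.quotKerEquivRange_apply_mk φ c
    have h2 : e.symm ⟨φ c, hc⟩ = Submodule.Quotient.mk c := by
      rw [← he, LinearEquiv.symm_apply_apply]
    show q (e.symm ⟨φ c, hc⟩) = ψ c
    rw [h2]
    exact Submodule.liftQ_apply _ _ _
  have hAnorm : ∀ w : LinearMap.range φ, ‖A w‖ = ‖w‖ := by
    rintro ⟨w, hw⟩
    obtain ⟨c, rfl⟩ := hw
    rw [hA c (LinearMap.mem_range_self φ c)]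
    simpa using hnorm c
  let Ai : LinearMap.range φ →ₗᵢ[ℂ] H := ⟨A, hAnorm⟩
  let U₀ : H →ₗᵢ[ℂ] H := Ai.extend
  have hU₀ : ∀ c : ι →₀ ℂ, U₀ (φ c) = ψ c := by
    intro c
    have := Ai.extend_apply ⟨φ c, LinearMap.mem_range_self φ c⟩
    rw [this]
    exact hA c _
  have hbij : Function.Bijective U₀.toLinearMap :=
    ⟨U₀.injective, LinearMap.injective_iff_surjective.mp U₀.injective⟩
  let U : H ≃ₗᵢ[ℂ] H :=
    { LinearEquiv.ofBijective U₀.toLinearMap hbij with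
      norm_map' := U₀.norm_map }
  refine ⟨U, fun i => ?_⟩
  have hx : φ (Finsupp.single i 1) = x i := by
    rw [hφ, Finsupp.linearCombination_single, one_smul]
  have hy : ψ (Finsupp.single i 1) = y i := by
    rw [hψ, Finsupp.linearCombination_single, one_smul]
  have hUx : U (x i) = U₀ (x i) := rfl
  rw [hUx, ← hx, hU₀, hy]

/-- The tail of a reduced word is reduced. -/
lemma reduce_tail_of_reduce_cons {α : Type*} [DecidableEq α] {x : α × Bool}
    {L : List (α × Bool)} (h : FreeGroup.reduce (x :: L) = x :: L) :
    FreeGroup.reduce L = L := by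
  rw [FreeGroup.reduce.cons] at h
  cases hL : FreeGroup.reduce L with
  | nil =>
    rw [hL] at h
    simp only [List.casesOn] at h
    injection h with h1 h2
  | cons hd tl =>
    rw [hL] at h
    simp only [List.casesOn] at h
    by_cases hc : x.1 = hd.1 ∧ x.2 = !hd.2
    · rw [if_pos hc] at h
      exfalso
      have hlen := FreeGroup.Red.length_le (FreeGroup.reduce.red (L := L))
      rw [hL, h] at hlen
      simp only [List.length_cons] at hlen
      omega
    · rw [if_neg hc] at h
      injection h with h1 h2

/-- Extension lemma (Bakonyi–Timotin). -/
theorem grounded_positive_extension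
    {d : ℕ} (g : MonoidAlgebra ℂ (FreeGroup (Fin d)))
    (hg : groupAlgebraStar g = g)
    (E : Finset (FreeGroup (Fin d))) (hE : Grounded (E : Set (FreeGroup (Fin d))))
    (hpos : (Matrix.of fun s t : E =>
        g.coeff ((s : FreeGroup (Fin d))⁻¹ * (t : FreeGroup (Fin d)))).PosSemidef) :
    ∃ g' : FreeGroup (Fin d) → ℂ, IsPositiveType g' ∧
      ∀ a : FreeGroup (Fin d), (∃ s ∈ E, ∃ t ∈ E, a = s⁻¹ * t) → g' a = g.coeff a := by
  classical
  obtain ⟨h1E', hgnd⟩ := hE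
  have h1E : (1 : FreeGroup (Fin d)) ∈ E := Finset.mem_coe.mp h1E'
  obtain ⟨B, hB⟩ : ∃ B : Matrix ↥E ↥E ℂ, (Matrix.of fun s t : E =>
      g.coeff ((s : FreeGroup (Fin d))⁻¹ * (t : FreeGroup (Fin d)))) = B.conjTranspose * B := by
    open scoped MatrixOrder in
    exact CStarAlgebra.nonneg_iff_eq_star_mul_self.mp hpos.nonneg
  let v : ↥E → EuclideanSpace ℂ ↥E :=
    fun s => (WithLp.equiv 2 (↥E → ℂ)).symm (fun j => B j s)
  have hvv : ∀ s t : ↥E, (inner ℂ (v s) (v t) : ℂ)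
      = g.coeff ((s : FreeGroup (Fin d))⁻¹ * (t : FreeGroup (Fin d))) := by
    intro s t
    have h0 : g.coeff ((s : FreeGroup (Fin d))⁻¹ * (t : FreeGroup (Fin d)))
        = (B.conjTranspose * B) s t := by rw [← hB]; rfl
    rw [h0, Matrix.mul_apply]
    simp [v, PiLp.inner_apply, RCLike.inner_apply, Matrix.conjTranspose_apply,
      WithLp.equiv_symm_apply]
    exact Finset.sum_congr rfl fun _ _ => mul_comm _ _
  have hext : ∀ i : Fin d, ∃ U : EuclideanSpace ℂ ↥E ≃ₗᵢ[ℂ] EuclideanSpace ℂ ↥E,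
      ∀ s t : ↥E, FreeGroup.of i * (s : FreeGroup (Fin d)) = t → U (v s) = v t := by
    intro i
    have hxy : ∀ q q' : {q : ↥E × ↥E // FreeGroup.of i * (q.1 : FreeGroup (Fin d)) = q.2},
        (inner ℂ (v q.1.1) (v q'.1.1) : ℂ) = inner ℂ (v q.1.2) (v q'.1.2) := by
      rintro ⟨⟨s, t⟩, hq⟩ ⟨⟨s', t'⟩, hq'⟩
      simp only at hq hq' ⊢
      rw [hvv, hvv]
      congr 1
      rw [← hq, ← hq']
      group
    obtain ⟨U, hU⟩ := exists_isometryEquiv_of_inner_eq _ _ hxy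
    exact ⟨U, fun s t hst => hU ⟨(s, t), hst⟩⟩
  choose U hU using hext
  let π : FreeGroup (Fin d) →* (EuclideanSpace ℂ ↥E ≃ₗᵢ[ℂ] EuclideanSpace ℂ ↥E) :=
    FreeGroup.lift U
  let ξ : EuclideanSpace ℂ ↥E := v ⟨1, h1E⟩
  have key : ∀ n (s : FreeGroup (Fin d)) (hs : s ∈ E), s.toWord.length ≤ n →
      π s ξ = v ⟨s, hs⟩ := by
    intro n
    induction n with
    | zero =>
      intro s hs hlen
      have hs1 : s = 1 := FreeGroup.toWord_eq_nil_iff.mp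
        (List.length_eq_zero_iff.mp (Nat.le_zero.mp hlen))
      subst hs1
      simp only [map_one]
      rfl
    | succ n ih =>
      intro s hs hlen
      cases hw : s.toWord with
      | nil =>
        have hs1 : s = 1 := FreeGroup.toWord_eq_nil_iff.mp hw
        subst hs1
        simp only [map_one]
        rfl
      | cons a L =>
        obtain ⟨i, b⟩ := a
        have hred : FreeGroup.reduce ((i, b) :: L) = (i, b) :: L := by
          have := FreeGroup.reduce_toWord s
          rw [hw] at this
          exact this
        have hredL : FreeGroup.reduce L = L := reduce_tail_of_reduce_cons hred
        have hsdecomp : s = FreeGroup.mk [(i, b)] * FreeGroup.mk L := by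
          rw [FreeGroup.mul_mk]
          conv_lhs => rw [← FreeGroup.mk_toWord (x := s), hw]
          rfl
        have hlen1 : (FreeGroup.mk [(i, b)]).toWord.length = 1 := by
          simp [FreeGroup.toWord_mk, FreeGroup.reduce_singleton]
        have hlenL : (FreeGroup.mk L).toWord.length = L.length := by
          rw [FreeGroup.toWord_mk, hredL]
        have hmemL : FreeGroup.mk L ∈ E := by
          have := hgnd s (Finset.mem_coe.mpr hs) (FreeGroup.mk [(i, b)])
            (FreeGroup.mk L) hsdecomp (by rw [hw, hlen1, hlenL]; simp [Nat.add_comm])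
          exact Finset.mem_coe.mp this
        have hLn : (FreeGroup.mk L).toWord.length ≤ n := by
          rw [hlenL]
          have hsl : s.toWord.length = L.length + 1 := by simp [hw]
          omega
        have hπL : π (FreeGroup.mk L) ξ = v ⟨FreeGroup.mk L, hmemL⟩ := ih _ hmemL hLn
        cases b with
        | true =>
          have hseq : s = FreeGroup.of i * FreeGroup.mk L := hsdecomp
          have hstep : π s ξ = (U i) (π (FreeGroup.mk L) ξ) := by
            rw [hseq, map_mul]
            have hlift : π (FreeGroup.of i) = U i := FreeGroup.lift_apply_of
            rw [hlift]
            rfl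
          rw [hstep, hπL]
          exact hU i ⟨FreeGroup.mk L, hmemL⟩ ⟨s, hs⟩ hseq.symm
        | false =>
          have hofinv : FreeGroup.mk [(i, false)] = (FreeGroup.of i)⁻¹ := by
            rw [show FreeGroup.of i = FreeGroup.mk [(i, true)] from rfl, FreeGroup.inv_mk]
            rfl
          have hseq : s = (FreeGroup.of i)⁻¹ * FreeGroup.mk L := by
            rw [hsdecomp, hofinv]
          have hmul : FreeGroup.of i * s = FreeGroup.mk L := by rw [hseq]; group
          have hUi : (U i) (v ⟨s, hs⟩) = v ⟨FreeGroup.mk L, hmemL⟩ :=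
            hU i ⟨s, hs⟩ ⟨FreeGroup.mk L, hmemL⟩ hmul
          have hstep : π s ξ = (U i).symm (π (FreeGroup.mk L) ξ) := by
            rw [hseq, map_mul, map_inv]
            have hlift : π (FreeGroup.of i) = U i := FreeGroup.lift_apply_of
            rw [hlift]
            rfl
          rw [hstep, hπL, ← hUi, LinearIsometryEquiv.symm_apply_apply]
  have hg2 : ∀ s t : FreeGroup (Fin d),
      (inner ℂ ξ (π (s⁻¹ * t) ξ) : ℂ) = inner ℂ (π s ξ) (π t ξ) := by
    intro s t
    rw [map_mul, map_inv]
    have h1 : ((π s)⁻¹ * π t) ξ = (π s).symm (π t ξ) := rfl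
    rw [h1]
    conv_rhs => rw [show π t ξ = (π s) ((π s).symm (π t ξ)) from
      (LinearIsometryEquiv.apply_symm_apply _ _).symm]
    rw [LinearIsometryEquiv.inner_map_map]
  refine ⟨fun a => (inner ℂ ξ (π a ξ) : ℂ), ?_, ?_⟩
  · intro h
    have hcalc : (∑ s ∈ h.support, ∑ t ∈ h.support,
        (starRingEnd ℂ) (h s) * h t * (inner ℂ ξ (π (s⁻¹ * t) ξ) : ℂ))
        = inner ℂ (∑ t ∈ h.support, h t • π t ξ) (∑ t ∈ h.support, h t • π t ξ) := by
      rw [sum_inner]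
      refine Finset.sum_congr rfl fun s _ => ?_
      rw [inner_sum]
      refine Finset.sum_congr rfl fun t _ => ?_
      rw [hg2, inner_smul_left, inner_smul_right]
      ring
    rw [hcalc]
    exact RCLike.nonneg_iff.mpr ⟨inner_self_nonneg, inner_self_im _⟩
  · rintro a ⟨s, hsE, t, htE, rfl⟩
    have h1 : (inner ℂ ξ (π (s⁻¹ * t) ξ) : ℂ) = inner ℂ (v ⟨s, hsE⟩) (v ⟨t, htE⟩) := by
      rw [hg2, key s.toWord.length s hsE le_rfl, key t.toWord.length t htE le_rfl]
    calc (inner ℂ ξ (π (s⁻¹ * t) ξ) : ℂ) = inner ℂ (v ⟨s, hsE⟩) (v ⟨t, htE⟩) := h1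
    _ = g.coeff (s⁻¹ * t) := hvv _ _
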